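/- arXiv:1708.06908 — 2 statements merged into one kernel-verified Lean document; each statement's English description precedes it below -/
import Mathlib

section
/- Under the same hypotheses (r, g closed convex proper, f convex differentiable with L-Lipschitz gradient, 0 < α < 3/(2L)), the residual norms of the PPG iteration z^{k+1} = z^k − αp(z^k) are monotonically nonincreasing: ‖p(z^{k+1})‖² ≤ ‖p(z^k)‖² − (1 − 2αL/3)‖p(z^{k+1}) − p(z^k)‖². -/
open Set Filter Topology
open scoped RealInnerProductSpace

noncomputable section

/-- `f` is closed (lower semicontinuous), convex, and proper
as an extended-real-valued function. -/
def ClosedConvexProper {E : Type*} [NormedAddCommGroup E] [NormedSpace ℝ E]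
    (f : E → EReal) : Prop :=
  LowerSemicontinuous f ∧
  (∀ (a b : ℝ) (x y : E), 0 ≤ a → 0 ≤ b → a + b = 1 →
    f (a • x + b • y) ≤ (a : EReal) * f x + (b : EReal) * f y) ∧
  (∀ x, f x ≠ ⊥) ∧ (∃ x, f x ≠ ⊤)

/-- `p` is a minimizer of the prox objective of the extended-real-valued `f` at `x₀`. -/
def IsProxPt {E : Type*} [NormedAddCommGroup E] [InnerProductSpace ℝ E]
    (f : E → EReal) (x₀ p : E) : Prop :=
  IsMinOn (fun x => f x + ((1 / 2 * ‖x - x₀‖ ^ 2 : ℝ) : EReal)) Set.univ p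

/-- `p` is a minimizer of the prox objective of the real-valued `f` at `x₀`. -/
def IsProxPtR {E : Type*} [NormedAddCommGroup E] [InnerProductSpace ℝ E]
    (f : E → ℝ) (x₀ p : E) : Prop :=
  IsMinOn (fun x => f x + 1 / 2 * ‖x - x₀‖ ^ 2) Set.univ p

section PPGaux

variable {E : Type*} [NormedAddCommGroup E] [InnerProductSpace ℝ E]

lemma ppg_lineDeriv [CompleteSpace E] (f : E → ℝ) (f' : E → E)
    (hf' : ∀ x, HasGradientAt f (f' x) x) (x d : E) (t : ℝ) :
    HasDerivAt (fun s : ℝ => f (x + s • d)) ⟪f' (x + t • d), d⟫ t := by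
  have hc : HasDerivAt (fun s : ℝ => x + s • d) d t := by
    simpa using ((hasDerivAt_id t).smul_const d).const_add x
  have h := ((hf' (x + t • d)).hasFDerivAt).comp_hasDerivAt t hc
  simp [InnerProductSpace.toDual_apply_apply] at h
  exact h

lemma ppg_gradIneq [CompleteSpace E] (f : E → ℝ) (hfconv : ConvexOn ℝ Set.univ f) (f' : E → E)
    (hf' : ∀ x, HasGradientAt f (f' x) x) (x y : E) :
    f x + ⟪f' x, y - x⟫ ≤ f y := by
  set d := y - x with hd
  have hφ : HasDerivAt (fun s : ℝ => f (x + s • d)) ⟪f' x, d⟫ 0 := by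
    simpa using ppg_lineDeriv f f' hf' x d 0
  have hslope : ∀ t ∈ Set.Ioc (0:ℝ) 1, slope (fun s : ℝ => f (x + s • d)) 0 t ≤ f y - f x := by
    intro t ht
    have hxt : x + t • d = (1 - t) • x + t • y := by
      rw [hd]; module
    have hcv := hfconv.2 (mem_univ x) (mem_univ y) (by linarith [ht.2] : (0:ℝ) ≤ 1 - t)
      ht.1.le (by ring)
    rw [slope_def_field]
    simp only [zero_smul, add_zero, sub_zero]
    rw [div_le_iff₀ ht.1]
    rw [hxt]
    simp only [smul_eq_mul] at hcv
    nlinarith [hcv]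
  have htend : Filter.Tendsto (slope (fun s : ℝ => f (x + s • d)) 0) (𝓝[>] 0)
      (𝓝 ⟪f' x, d⟫) := by
    have := hasDerivAt_iff_tendsto_slope.mp hφ
    exact this.mono_left (nhdsWithin_mono 0 (fun t ht => ne_of_gt ht))
  have hle : ⟪f' x, d⟫ ≤ f y - f x := by
    refine le_of_tendsto htend ?_
    filter_upwards [Ioc_mem_nhdsGT_of_mem (Set.mem_Ico.mpr ⟨le_refl 0, zero_lt_one⟩)] with t ht
    exact hslope t ht
  linarith

lemma ppg_descent [CompleteSpace E] (f : E → ℝ) (f' : E → E)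
    (hf' : ∀ x, HasGradientAt f (f' x) x)
    (L : ℝ) (hL : 0 < L) (hLip : ∀ x y, ‖f' x - f' y‖ ≤ L * ‖x - y‖) (x y : E) :
    f y ≤ f x + ⟪f' x, y - x⟫ + L / 2 * ‖y - x‖ ^ 2 := by
  set d := y - x with hd
  set h : ℝ → ℝ := fun t => f (x + t • d) - t * ⟪f' x, d⟫ - L / 2 * t ^ 2 * ‖d‖ ^ 2 with hh
  have hder : ∀ t : ℝ, HasDerivAt h (⟪f' (x + t • d), d⟫ - ⟪f' x, d⟫ - L * t * ‖d‖ ^ 2) t := by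
    intro t
    have h1 := ppg_lineDeriv f f' hf' x d t
    have h2 : HasDerivAt (fun s : ℝ => s * ⟪f' x, d⟫) ⟪f' x, d⟫ t := by
      simpa using (hasDerivAt_id t).mul_const ⟪f' x, d⟫
    have h3 : HasDerivAt (fun s : ℝ => L / 2 * s ^ 2 * ‖d‖ ^ 2) (L * t * ‖d‖ ^ 2) t := by
      have hp : HasDerivAt (fun s : ℝ => s ^ 2) (2 * t) t := by
        simpa using (hasDerivAt_pow 2 t)
      have := (hp.const_mul (L / 2)).mul_const (‖d‖ ^ 2)
      convert this using 1
      · rfl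
      · rfl
      ring
    have := (h1.sub h2).sub h3
    exact this
  have hanti : AntitoneOn h (Set.Icc (0:ℝ) 1) := by
    apply antitoneOn_of_deriv_nonpos (convex_Icc 0 1)
    · exact fun t _ => ((hder t).continuousAt).continuousWithinAt
    · intro t ht
      exact ((hder t).differentiableAt).differentiableWithinAt
    · intro t ht
      rw [interior_Icc] at ht
      rw [(hder t).deriv]
      have hb : ⟪f' (x + t • d) - f' x, d⟫ ≤ L * t * ‖d‖ ^ 2 := by
        calc ⟪f' (x + t • d) - f' x, d⟫ ≤ ‖f' (x + t • d) - f' x‖ * ‖d‖ :=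
              real_inner_le_norm _ _
          _ ≤ (L * ‖(x + t • d) - x‖) * ‖d‖ := by
              have := hLip (x + t • d) x
              nlinarith [norm_nonneg d]
          _ = L * t * ‖d‖ ^ 2 := by
              simp [norm_smul, abs_of_pos ht.1]
              ring
      have := inner_sub_left (𝕜 := ℝ) (f' (x + t • d)) (f' x) d
      rw [this] at hb
      linarith
  have h10 : h 1 ≤ h 0 := hanti (Set.mem_Icc.mpr ⟨le_refl 0, zero_le_one⟩)
      (Set.mem_Icc.mpr ⟨zero_le_one, le_refl 1⟩) zero_le_one
  simp only [hh, one_smul, zero_smul, add_zero, one_pow, one_mul, zero_pow, mul_zero, zero_mul,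
    sub_zero] at h10
  have hxy : x + d = y := by rw [hd]; abel
  rw [hxy] at h10
  linarith

lemma ppg_cocoHalf [CompleteSpace E] (f : E → ℝ) (hfconv : ConvexOn ℝ Set.univ f) (f' : E → E)
    (hf' : ∀ x, HasGradientAt f (f' x) x)
    (L : ℝ) (hL : 0 < L) (hLip : ∀ x y, ‖f' x - f' y‖ ≤ L * ‖x - y‖) (x y : E) :
    f y ≤ f x - ⟪f' y, x - y⟫ - 1 / (2 * L) * ‖f' x - f' y‖ ^ 2 := by
  set dv := f' x - f' y with hdv
  set z := x - (1 / L) • dv with hz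
  have h1 := ppg_gradIneq f hfconv f' hf' y z
  have h2 := ppg_descent f f' hf' L hL hLip x z
  have e1 : ⟪f' x, z - x⟫ = -(1 / L) * ⟪f' x, dv⟫ := by
    have : z - x = -((1 / L) • dv) := by rw [hz]; abel
    rw [this, inner_neg_right, inner_smul_right]
    ring
  have e2 : ‖z - x‖ ^ 2 = (1 / L) ^ 2 * ‖dv‖ ^ 2 := by
    have : z - x = -((1 / L) • dv) := by rw [hz]; abel
    rw [this, norm_neg, norm_smul, Real.norm_eq_abs,
      abs_of_pos (by positivity : (0:ℝ) < 1 / L)]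
    ring
  have e3 : ⟪f' y, z - y⟫ = ⟪f' y, x - y⟫ - (1 / L) * ⟪f' y, dv⟫ := by
    have : z - y = (x - y) - (1 / L) • dv := by rw [hz]; abel
    rw [this, inner_sub_right, inner_smul_right]
  have e4 : ⟪f' x, dv⟫ - ⟪f' y, dv⟫ = ‖dv‖ ^ 2 := by
    rw [← inner_sub_left, ← hdv, real_inner_self_eq_norm_sq]
  have hL' : L ≠ 0 := ne_of_gt hL
  rw [e1, e2] at h2
  rw [e3] at h1
  have key : f y ≤ f x - ⟪f' y, x - y⟫ + (-(1/L) * ⟪f' x, dv⟫ + (1/L) * ⟪f' y, dv⟫ + (L / 2 * ((1/L)^2 * ‖dv‖^2))) := by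
    linarith
  have : -(1/L) * ⟪f' x, dv⟫ + (1/L) * ⟪f' y, dv⟫ + (L / 2 * ((1/L)^2 * ‖dv‖^2))
      = -(1 / (2 * L)) * ‖dv‖ ^ 2 := by
    rw [show -(1/L) * ⟪f' x, dv⟫ + (1/L) * ⟪f' y, dv⟫ + (L / 2 * ((1/L)^2 * ‖dv‖^2))
        = -(1/L) * (⟪f' x, dv⟫ - ⟪f' y, dv⟫) + (L / 2 * ((1/L)^2 * ‖dv‖^2)) by ring, e4]
    field_simp
    ring
  rw [this] at key
  linarith

lemma ppg_coco [CompleteSpace E] (f : E → ℝ) (hfconv : ConvexOn ℝ Set.univ f) (f' : E → E)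
    (hf' : ∀ x, HasGradientAt f (f' x) x)
    (L : ℝ) (hL : 0 < L) (hLip : ∀ x y, ‖f' x - f' y‖ ≤ L * ‖x - y‖) (x y : E) :
    1 / L * ‖f' x - f' y‖ ^ 2 ≤ ⟪f' x - f' y, x - y⟫ := by
  have h1 := ppg_cocoHalf f hfconv f' hf' L hL hLip x y
  have h2 := ppg_cocoHalf f hfconv f' hf' L hL hLip y x
  have e1 : ‖f' y - f' x‖ = ‖f' x - f' y‖ := norm_sub_rev _ _
  have e3 : -⟪f' y, x - y⟫ - ⟪f' x, y - x⟫ = ⟪f' x - f' y, x - y⟫ := by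
    rw [inner_sub_left]
    have : ⟪f' x, y - x⟫ = -⟪f' x, x - y⟫ := by
      rw [← inner_neg_right]; congr 1; abel
    rw [this]
    ring
  rw [e1] at h2
  have hq2 : 1/(2*L) * ‖f' x - f' y‖^2 + 1/(2*L) * ‖f' x - f' y‖^2
      = 1/L * ‖f' x - f' y‖^2 := by
    field_simp
    ring
  linarith [h1, h2, e3, hq2]

lemma ppg_proxFinite (α : ℝ) (hα : 0 < α) (r : E → EReal)
    (hbot : ∀ x, r x ≠ ⊥) (hproper : ∃ x, r x ≠ ⊤) (w p : E)
    (hp : IsProxPt (fun x => (α : EReal) * r x) w p) : r p ≠ ⊤ := by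
  obtain ⟨x₀, hx₀⟩ := hproper
  intro htop
  have hmin := isMinOn_iff.mp hp x₀ (Set.mem_univ x₀)
  set c₀ : ℝ := (r x₀).toReal with hc₀
  have hrx₀ : r x₀ = (c₀ : EReal) := (EReal.coe_toReal hx₀ (hbot x₀)).symm
  have hRHS : (α : EReal) * r x₀ + ((1 / 2 * ‖x₀ - w‖ ^ 2 : ℝ) : EReal)
      = ((α * c₀ + 1 / 2 * ‖x₀ - w‖ ^ 2 : ℝ) : EReal) := by
    rw [hrx₀, ← EReal.coe_mul, ← EReal.coe_add]
  have hLHS : (α : EReal) * r p + ((1 / 2 * ‖p - w‖ ^ 2 : ℝ) : EReal) = ⊤ := by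
    rw [htop, EReal.mul_top_of_pos (by exact_mod_cast hα), EReal.top_add_coe]
  rw [hLHS, hRHS] at hmin
  exact (EReal.coe_lt_top _).not_ge hmin

lemma ppg_proxSubgrad (α : ℝ) (hα : 0 < α) (r : E → EReal)
    (hconv : ∀ (a b : ℝ) (x y : E), 0 ≤ a → 0 ≤ b → a + b = 1 →
      r (a • x + b • y) ≤ (a : EReal) * r x + (b : EReal) * r y)
    (w p x : E) (hp : IsProxPt (fun x => (α : EReal) * r x) w p)
    (rp rx : ℝ) (hrp : r p = (rp : EReal)) (hrx : r x = (rx : EReal)) :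
    ⟪w - p, x - p⟫ ≤ α * rx - α * rp := by
  have key : ∀ t : ℝ, 0 < t → t ≤ 1 →
      ⟪w - p, x - p⟫ ≤ α * rx - α * rp + t / 2 * ‖x - p‖ ^ 2 := by
    intro t ht ht1
    have hmin := isMinOn_iff.mp hp ((1 - t) • p + t • x) (Set.mem_univ _)
    have hcv := hconv (1 - t) t p x (by linarith) ht.le (by ring)
    rw [hrp, hrx] at hcv
    have hcv' : r ((1 - t) • p + t • x) ≤ (((1 - t) * rp + t * rx : ℝ) : EReal) := by
      rw [EReal.coe_add, EReal.coe_mul, EReal.coe_mul]; exact hcv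
    have hcv2 : (α : EReal) * r ((1 - t) • p + t • x)
        ≤ (α : EReal) * (((1 - t) * rp + t * rx : ℝ) : EReal) :=
      mul_le_mul_of_nonneg_left hcv' (by exact_mod_cast hα.le)
    have hmin2 : ((α * rp + 1 / 2 * ‖p - w‖ ^ 2 : ℝ) : EReal)
        ≤ ((α * ((1 - t) * rp + t * rx) + 1 / 2 * ‖(1 - t) • p + t • x - w‖ ^ 2 : ℝ) : EReal) := by
      calc ((α * rp + 1 / 2 * ‖p - w‖ ^ 2 : ℝ) : EReal)
          = (α : EReal) * r p + ((1 / 2 * ‖p - w‖ ^ 2 : ℝ) : EReal) := by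
            rw [hrp]; norm_cast
        _ ≤ (α : EReal) * r ((1 - t) • p + t • x)
            + ((1 / 2 * ‖(1 - t) • p + t • x - w‖ ^ 2 : ℝ) : EReal) := hmin
        _ ≤ (α : EReal) * (((1 - t) * rp + t * rx : ℝ) : EReal)
            + ((1 / 2 * ‖(1 - t) • p + t • x - w‖ ^ 2 : ℝ) : EReal) :=
            add_le_add_left hcv2 _
        _ = ((α * ((1 - t) * rp + t * rx) + 1 / 2 * ‖(1 - t) • p + t • x - w‖ ^ 2 : ℝ) : EReal) := by
            norm_cast
    rw [EReal.coe_le_coe_iff] at hmin2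
    have hpt : (1 - t) • p + t • x - w = (p - w) + t • (x - p) := by
      rw [sub_smul, one_smul, smul_sub]; abel
    have hnorm : ‖(1 - t) • p + t • x - w‖ ^ 2
        = ‖p - w‖ ^ 2 + 2 * (t * ⟪p - w, x - p⟫) + t ^ 2 * ‖x - p‖ ^ 2 := by
      rw [hpt, norm_add_sq_real, real_inner_smul_right, norm_smul, Real.norm_eq_abs,
        mul_pow, sq_abs]
    rw [hnorm] at hmin2
    have hinner : ⟪w - p, x - p⟫ = -⟪p - w, x - p⟫ := by
      rw [show w - p = -(p - w) by abel, inner_neg_left]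
    rw [hinner]
    nlinarith [hmin2, ht, sq_nonneg t]
  by_contra hcon
  push_neg at hcon
  set B := ⟪w - p, x - p⟫
  set A := α * rx - α * rp
  set C := ‖x - p‖ ^ 2 with hC
  have hC0 : 0 ≤ C := by positivity
  set t : ℝ := min 1 ((B - A) / (C + 1)) with hts
  have htpos : 0 < t := by
    apply lt_min one_pos
    apply div_pos (by linarith) (by linarith)
  have ht1 : t ≤ 1 := min_le_left _ _
  have ht2 : t ≤ (B - A) / (C + 1) := min_le_right _ _
  have := key t htpos ht1
  have h3 : t / 2 * C < B - A := by
    have h4 : (B - A) / (C + 1) * C < (B - A) * 1 := by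
      rw [div_mul_eq_mul_div, div_lt_iff₀ (by linarith)]
      nlinarith [hcon]
    nlinarith [htpos, hC0, ht2]
  linarith

lemma ppg_proxMono (α : ℝ) (hα : 0 < α) (r : E → EReal)
    (hconv : ∀ (a b : ℝ) (x y : E), 0 ≤ a → 0 ≤ b → a + b = 1 →
      r (a • x + b • y) ≤ (a : EReal) * r x + (b : EReal) * r y)
    (hbot : ∀ x, r x ≠ ⊥) (hproper : ∃ x, r x ≠ ⊤)
    (w₁ w₂ p₁ p₂ : E)
    (h₁ : IsProxPt (fun x => (α : EReal) * r x) w₁ p₁)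
    (h₂ : IsProxPt (fun x => (α : EReal) * r x) w₂ p₂) :
    0 ≤ ⟪(w₁ - p₁) - (w₂ - p₂), p₁ - p₂⟫ := by
  have hf₁ := ppg_proxFinite α hα r hbot hproper w₁ p₁ h₁
  have hf₂ := ppg_proxFinite α hα r hbot hproper w₂ p₂ h₂
  set r₁ : ℝ := (r p₁).toReal with hr₁
  set r₂ : ℝ := (r p₂).toReal with hr₂
  have hrp₁ : r p₁ = (r₁ : EReal) := (EReal.coe_toReal hf₁ (hbot p₁)).symm
  have hrp₂ : r p₂ = (r₂ : EReal) := (EReal.coe_toReal hf₂ (hbot p₂)).symm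
  have k₁ := ppg_proxSubgrad α hα r hconv w₁ p₁ p₂ h₁ r₁ r₂ hrp₁ hrp₂
  have k₂ := ppg_proxSubgrad α hα r hconv w₂ p₂ p₁ h₂ r₂ r₁ hrp₂ hrp₁
  have e : ⟪(w₁ - p₁) - (w₂ - p₂), p₁ - p₂⟫
      = -⟪w₁ - p₁, p₂ - p₁⟫ - ⟪w₂ - p₂, p₁ - p₂⟫ := by
    have h5 : (⟪w₁ - p₁, p₂ - p₁⟫ : ℝ) = -⟪w₁ - p₁, p₁ - p₂⟫ := by
      rw [show p₂ - p₁ = -(p₁ - p₂) by abel, inner_neg_right]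
    rw [inner_sub_left, h5]
    ring
  rw [e]
  linarith

end PPGaux

set_option maxHeartbeats 2000000 in
/-- The PPG residual norms are monotonically nonincreasing. -/
theorem stmt13
    {d : ℕ} (α : ℝ) (hα : 0 < α)
    (r g : EuclideanSpace ℝ (Fin d) → EReal)
    (hr : ClosedConvexProper r) (hg : ClosedConvexProper g)
    (f : EuclideanSpace ℝ (Fin d) → ℝ) (hfconv : ConvexOn ℝ Set.univ f)
    (f' : EuclideanSpace ℝ (Fin d) → EuclideanSpace ℝ (Fin d))
    (hf' : ∀ x, HasGradientAt f (f' x) x)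
    (Pr Pg : EuclideanSpace ℝ (Fin d) → EuclideanSpace ℝ (Fin d))
    (hPr : ∀ w, IsProxPt (fun x => (α : EReal) * r x) w (Pr w))
    (hPg : ∀ w, IsProxPt (fun x => (α : EReal) * g x) w (Pg w))
    (P : EuclideanSpace ℝ (Fin d) → EuclideanSpace ℝ (Fin d))
    (hP : ∀ z, P z = α⁻¹ • (Pr z - Pg ((2 : ℝ) • Pr z - z - α • f' (Pr z))))
    (L : ℝ) (hL : 0 < L)
    (hLip : ∀ x y, ‖f' x - f' y‖ ≤ L * ‖x - y‖)
    (hαL : α < 3 / (2 * L))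
    (z : ℕ → EuclideanSpace ℝ (Fin d))
    (hiter : ∀ k, z (k + 1) = z k - α • P (z k)) :
    ∀ k, ‖P (z (k + 1))‖ ^ 2 ≤
      ‖P (z k)‖ ^ 2 - (1 - 2 * α * L / 3) * ‖P (z (k + 1)) - P (z k)‖ ^ 2 := by
  intro k
  set z₁ := z k with hz₁
  set z₂ := z (k + 1) with hz₂def
  have hz₂ : z₂ = z₁ - α • P z₁ := hiter k
  set x₁ := Pr z₁ with hx₁
  set x₂ := Pr z₂ with hx₂
  set w₁ := (2 : ℝ) • x₁ - z₁ - α • f' x₁ with hw₁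
  set w₂ := (2 : ℝ) • x₂ - z₂ - α • f' x₂ with hw₂
  set y₁ := Pg w₁ with hy₁
  set y₂ := Pg w₂ with hy₂
  have hP₁ : x₁ - y₁ = α • P z₁ := by
    rw [hP z₁, smul_smul, mul_inv_cancel₀ (ne_of_gt hα), one_smul]
  have hP₂ : x₂ - y₂ = α • P z₂ := by
    rw [hP z₂, smul_smul, mul_inv_cancel₀ (ne_of_gt hα), one_smul]
  set a := x₁ - x₂ with ha
  set b := y₁ - y₂ with hb
  set u := z₁ - z₂ with hu
  set gv := f' x₁ - f' x₂ with hgv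
  -- inequality (A)
  have hA := ppg_proxMono α hα r hr.2.1 hr.2.2.1 hr.2.2.2 z₁ z₂ x₁ x₂ (hPr z₁) (hPr z₂)
  have hA' : ‖a‖ ^ 2 ≤ ⟪u, a⟫ := by
    have e : (z₁ - x₁) - (z₂ - x₂) = u - a := by rw [hu, ha]; abel
    rw [e, inner_sub_left, real_inner_self_eq_norm_sq] at hA
    linarith
  -- inequality (B)
  have hB := ppg_proxMono α hα g hg.2.1 hg.2.2.1 hg.2.2.2 w₁ w₂ y₁ y₂ (hPg w₁) (hPg w₂)
  have hB' : ⟪u, b⟫ + ‖b‖ ^ 2 + α * ⟪gv, b⟫ ≤ 2 * ⟪a, b⟫ := by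
    have e : (w₁ - y₁) - (w₂ - y₂) = (2 : ℝ) • a - u - α • gv - b := by
      rw [hw₁, hw₂, ha, hu, hgv, hb]
      module
    rw [e] at hB
    rw [inner_sub_left, inner_sub_left, inner_sub_left, inner_smul_left, inner_smul_left,
      real_inner_self_eq_norm_sq] at hB
    simp only [RCLike.conj_to_real, conj_trivial] at hB
    linarith
  -- cocoercivity (C)
  have hC := ppg_coco f hfconv f' hf' L hL hLip x₁ x₂
  have hC' : 1 / L * ‖gv‖ ^ 2 ≤ ⟪gv, a⟫ := hC
  -- Young's inequality
  have hY : ⟪gv, a - b⟫ ≤ 1 / L * ‖gv‖ ^ 2 + L / 4 * ‖a - b‖ ^ 2 := by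
    have h1 : ⟪gv, a - b⟫ ≤ ‖gv‖ * ‖a - b‖ := real_inner_le_norm _ _
    have h3 : ‖gv‖ * ‖a - b‖ ≤ 1 / L * ‖gv‖ ^ 2 + L / 4 * ‖a - b‖ ^ 2 := by
      rw [← sub_nonneg]
      have he : 1 / L * ‖gv‖ ^ 2 + L / 4 * ‖a - b‖ ^ 2 - ‖gv‖ * ‖a - b‖
          = 1 / (4 * L) * (2 * ‖gv‖ - L * ‖a - b‖) ^ 2 := by
        field_simp
        ring
      rw [he]
      positivity
    linarith [h1, h3]
  -- key monotonicity inequality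
  have hgb : ⟪gv, a - b⟫ = ⟪gv, a⟫ - ⟪gv, b⟫ := inner_sub_right _ _ _
  have hnab : ‖a - b‖ ^ 2 = ‖a‖ ^ 2 - 2 * ⟪a, b⟫ + ‖b‖ ^ 2 := norm_sub_sq_real a b
  have hiu : ⟪a - b, u⟫ = ⟪u, a⟫ - ⟪u, b⟫ := by
    rw [inner_sub_left, real_inner_comm a u, real_inner_comm b u]
  have hkey : (1 - α * L / 4) * ‖a - b‖ ^ 2 ≤ ⟪a - b, u⟫ := by
    rw [hiu]
    nlinarith [hA', hB', hC', hY, hα, hgb, hnab]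
  -- translate to P
  set q := P z₁ - P z₂ with hq
  have hab : a - b = α • q := by
    rw [ha, hb, hq, smul_sub, ← hP₁, ← hP₂]
    abel
  have huq : u = α • P z₁ := by
    rw [hu, hz₂]
    abel
  have hkey2 : (1 - α * L / 4) * ‖q‖ ^ 2 ≤ ⟪q, P z₁⟫ := by
    rw [hab, huq] at hkey
    rw [inner_smul_left, inner_smul_right] at hkey
    simp only [RCLike.conj_to_real, conj_trivial] at hkey
    rw [norm_smul, Real.norm_eq_abs, abs_of_pos hα, mul_pow] at hkey
    have hα2 : 0 < α ^ 2 := by positivity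
    nlinarith [hkey, hα2]
  -- conclude
  have hexp : ‖P z₂‖ ^ 2 = ‖P z₁‖ ^ 2 - 2 * ⟪P z₁, q⟫ + ‖q‖ ^ 2 := by
    have he2 : P z₂ = P z₁ - q := by rw [hq]; abel
    rw [he2]
    exact norm_sub_sq_real _ _
  have hcomm : ⟪P z₁, q⟫ = ⟪q, P z₁⟫ := real_inner_comm _ _
  have hqn : ‖P z₂ - P z₁‖ ^ 2 = ‖q‖ ^ 2 := by
    rw [show P z₂ - P z₁ = -q by rw [hq]; abel, norm_neg]
  rw [hqn, hexp, hcomm]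
  have hq0 : 0 ≤ ‖q‖ ^ 2 := by positivity
  nlinarith [hkey2, hq0, hα, hL, mul_pos hα hL]
end
end

section
/- Let r, g closed convex proper, f convex differentiable with L-Lipschitz gradient, 0 < α < 3/(2L), and suppose a fixed point z* of the PPG iteration exists. Then for the iterates z^{k+1} = z^k − αp(z^k), the sums Σ_{k=0}^∞ ‖p(z^k)‖² and Σ_{k=0}^∞ ‖∇f(x^{k+1/2}) − ∇f(x*)‖² are finite, and consequently min_{0≤i≤k} ‖p(z^i)‖² ≤ C/k for some constant C depending only on ‖z^0 − z*‖, α, and L. -/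
open Set Filter Topology
open scoped RealInnerProductSpace

noncomputable section

section Aux
variable {E : Type*} [NormedAddCommGroup E] [InnerProductSpace ℝ E]

lemma prox_val_real {r : E → EReal} (hbot : ∀ x, r x ≠ ⊥) {x₀ : E} (htop : r x₀ ≠ ⊤)
    {α : ℝ} (hα : 0 < α) {w p : E} (hp : IsProxPt (fun x => (α : EReal) * r x) w p) :
    ∃ ρ : ℝ, r p = (ρ : EReal) := by
  have h0 := isMinOn_iff.mp hp x₀ (Set.mem_univ x₀)
  simp only at h0
  have hx0 : r x₀ = ((r x₀).toReal : EReal) := (EReal.coe_toReal htop (hbot x₀)).symm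
  have hptop : r p ≠ ⊤ := by
    intro h
    rw [h, hx0] at h0
    simp only [EReal.coe_mul_top_of_pos hα, EReal.top_add_coe, ← EReal.coe_mul,
      ← EReal.coe_add] at h0
    exact (EReal.coe_lt_top _).not_ge h0
  exact ⟨(r p).toReal, (EReal.coe_toReal hptop (hbot p)).symm⟩

lemma norm_combo {s t : ℝ} (hst : s + t = 1) (p y w : E) :
    ‖(s • p + t • y) - w‖ ^ 2 = s * ‖p - w‖ ^ 2 + t * ‖y - w‖ ^ 2 - s * t * ‖y - p‖ ^ 2 := by
  have h1 : (s • p + t • y) - w = s • (p - w) + t • (y - w) := by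
    match_scalars <;> linarith
  have h2 : y - p = (y - w) - (p - w) := by abel
  rw [h1, h2]
  generalize (p - w : E) = a
  generalize (y - w : E) = b
  rw [norm_add_sq_real, norm_sub_sq_real, norm_smul, norm_smul,
    real_inner_smul_left, real_inner_smul_right, Real.norm_eq_abs, Real.norm_eq_abs,
    mul_pow, mul_pow, sq_abs, sq_abs, real_inner_comm]
  linear_combination (s * ‖a‖ ^ 2 + t * ‖b‖ ^ 2) * hst

lemma prox_strong_min {r : E → EReal} (hbot : ∀ x, r x ≠ ⊥)
    (hconv : ∀ (a b : ℝ) (x y : E), 0 ≤ a → 0 ≤ b → a + b = 1 →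
      r (a • x + b • y) ≤ (a : EReal) * r x + (b : EReal) * r y)
    {α : ℝ} (hα : 0 < α) {w p : E} (hp : IsProxPt (fun x => (α : EReal) * r x) w p)
    {ρp ρy : ℝ} (hρp : r p = (ρp : EReal)) {y : E} (hρy : r y = (ρy : EReal)) :
    α * ρp + 1/2 * ‖p - w‖^2 + 1/2 * ‖y - p‖^2 ≤ α * ρy + 1/2 * ‖y - w‖^2 := by
  have key : ∀ t : ℝ, 0 < t → t < 1 →
      α * ρp + 1/2 * ‖p - w‖^2 + (1-t)/2 * ‖y - p‖^2 ≤ α * ρy + 1/2 * ‖y - w‖^2 := by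
    intro t ht0 ht1
    have hst : (1 - t) + t = 1 := by ring
    set xt : E := (1 - t) • p + t • y with hxt
    have hcv := hconv (1 - t) t p y (by linarith) ht0.le hst
    rw [hρp, hρy, ← EReal.coe_mul, ← EReal.coe_mul, ← EReal.coe_add] at hcv
    have hxtop : r xt ≠ ⊤ := (lt_of_le_of_lt hcv (EReal.coe_lt_top _)).ne
    set ρt : ℝ := (r xt).toReal with hρt
    have hxte : r xt = (ρt : EReal) := (EReal.coe_toReal hxtop (hbot xt)).symm
    rw [hxte, EReal.coe_le_coe_iff] at hcv
    have hmin := isMinOn_iff.mp hp xt (Set.mem_univ xt)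
    simp only [hρp, hxte, ← EReal.coe_mul, ← EReal.coe_add, EReal.coe_le_coe_iff] at hmin
    have hnc : ‖xt - w‖ ^ 2 = (1-t) * ‖p - w‖ ^ 2 + t * ‖y - w‖ ^ 2 - (1-t) * t * ‖y - p‖ ^ 2 :=
      norm_combo hst p y w
    have hcv' : α * ρt ≤ α * ((1-t) * ρp + t * ρy) := mul_le_mul_of_nonneg_left hcv hα.le
    have hcomb : t * (α * ρp + 1/2 * ‖p - w‖^2 + (1-t)/2 * ‖y - p‖^2)
        ≤ t * (α * ρy + 1/2 * ‖y - w‖^2) := by nlinarith [hmin, hcv', hnc]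
    exact le_of_mul_le_mul_left hcomb ht0
  by_contra hcon
  push_neg at hcon
  obtain ⟨t, ht0, ht1, hgt⟩ : ∃ t : ℝ, 0 < t ∧ t < 1 ∧
      α * ρy + 1 / 2 * ‖y - w‖ ^ 2 < α * ρp + 1 / 2 * ‖p - w‖ ^ 2 + (1 - t) / 2 * ‖y - p‖ ^ 2 := by
    set ε := (α * ρp + 1/2 * ‖p - w‖^2 + 1/2 * ‖y - p‖^2) - (α * ρy + 1/2 * ‖y - w‖^2) with hε
    have hyp : (0:ℝ) ≤ ‖y - p‖^2 := sq_nonneg _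
    have hε0 : 0 < ε := by simp only [hε]; linarith
    refine ⟨min (1/2) (ε / (‖y - p‖^2 + 1)), lt_min (by norm_num) (div_pos hε0 (by linarith)),
      lt_of_le_of_lt (min_le_left _ _) (by norm_num), ?_⟩
    have h2 : min (1/2) (ε / (‖y - p‖^2 + 1)) * (‖y - p‖^2 + 1) ≤ ε := by
      rw [← le_div_iff₀ (by linarith)]; exact min_le_right _ _
    have h3 : 0 < min (1/2) (ε / (‖y - p‖^2 + 1)) := lt_min (by norm_num) (div_pos hε0 (by linarith))
    nlinarith [h2, h3, hε0, hyp]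
  exact absurd (key t ht0 ht1) (not_le.mpr hgt)

lemma prox_firm {r : E → EReal} (hbot : ∀ x, r x ≠ ⊥)
    (hconv : ∀ (a b : ℝ) (x y : E), 0 ≤ a → 0 ≤ b → a + b = 1 →
      r (a • x + b • y) ≤ (a : EReal) * r x + (b : EReal) * r y)
    (htop : ∃ x₀, r x₀ ≠ ⊤)
    {α : ℝ} (hα : 0 < α) {Pr : E → E}
    (hPr : ∀ w, IsProxPt (fun x => (α : EReal) * r x) w (Pr w)) (w w' : E) :
    ‖Pr w - Pr w'‖^2 ≤ ⟪Pr w - Pr w', w - w'⟫ := by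
  obtain ⟨x₀, hx₀⟩ := htop
  obtain ⟨ρ₁, hρ₁⟩ := prox_val_real hbot hx₀ hα (hPr w)
  obtain ⟨ρ₂, hρ₂⟩ := prox_val_real hbot hx₀ hα (hPr w')
  have h1 := prox_strong_min hbot hconv hα (hPr w) hρ₁ hρ₂
  have h2 := prox_strong_min hbot hconv hα (hPr w') hρ₂ hρ₁
  set p := Pr w
  set q := Pr w'
  have e1 : ‖q - w‖^2 = ‖q - w'‖^2 + 2*⟪q - w', w' - w⟫ + ‖w' - w‖^2 := by
    rw [show q - w = (q - w') + (w' - w) by abel, norm_add_sq_real]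
  have e2 : ‖p - w'‖^2 = ‖p - w‖^2 + 2*⟪p - w, w - w'⟫ + ‖w - w'‖^2 := by
    rw [show p - w' = (p - w) + (w - w') by abel, norm_add_sq_real]
  have e3 : ‖q - p‖^2 = ‖p - q‖^2 := by rw [← neg_sub, norm_neg]
  have e4 : ⟪p - q, w - w'⟫ = ⟪p - w, w - w'⟫ + ⟪w - q, w - w'⟫ := by
    rw [← inner_add_left]; congr 1; abel
  have e5 : ⟪q - w', w' - w⟫ = - ⟪q - w', w - w'⟫ := by
    rw [← inner_neg_right]; congr 1; abel
  have e6 : ⟪w - q, w - w'⟫ = ⟪w - w', w - w'⟫ - ⟪q - w', w - w'⟫ := by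
    rw [← inner_sub_left]; congr 1; abel
  have e7 : ⟪w - w', w - w'⟫ = ‖w - w'‖^2 := real_inner_self_eq_norm_sq _
  have e8 : ‖w' - w‖^2 = ‖w - w'‖^2 := by rw [← neg_sub, norm_neg]
  nlinarith [h1, h2]

variable {E : Type*} [NormedAddCommGroup E] [InnerProductSpace ℝ E] [CompleteSpace E]

lemma line_deriv {f : E → ℝ} {f' : E → E} (hf' : ∀ x, HasGradientAt f (f' x) x)
    (x v : E) (t : ℝ) :
    HasDerivAt (fun s : ℝ => f (x + s • v)) ⟪f' (x + t • v), v⟫ t := by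
  have hc : HasDerivAt (fun s : ℝ => x + s • v) v t := by
    simpa using ((hasDerivAt_id t).smul_const v).const_add x
  have h := (hf' (x + t • v)).hasFDerivAt.comp_hasDerivAt t hc
  simpa [InnerProductSpace.toDual_apply_apply, Function.comp_def] using h

lemma descent_lemma {f : E → ℝ} {f' : E → E} (hf' : ∀ x, HasGradientAt f (f' x) x)
    {L : ℝ} (hL : 0 < L) (hLip : ∀ x y, ‖f' x - f' y‖ ≤ L * ‖x - y‖) (x y : E) :
    f y ≤ f x + ⟪f' x, y - x⟫ + L / 2 * ‖y - x‖ ^ 2 := by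
  set v := y - x with hv
  set φ : ℝ → ℝ := fun t => f (x + t • v) - t * ⟪f' x, v⟫ - L / 2 * ‖v‖ ^ 2 * t ^ 2 with hφ
  have hder : ∀ t : ℝ, HasDerivAt φ
      (⟪f' (x + t • v), v⟫ - ⟪f' x, v⟫ - L / 2 * ‖v‖ ^ 2 * (2 * t)) t := by
    intro t
    have h1 := line_deriv hf' x v t
    have h2 : HasDerivAt (fun s : ℝ => s * ⟪f' x, v⟫) ⟪f' x, v⟫ t := by
      simpa using (hasDerivAt_id t).mul_const ⟪f' x, v⟫
    have h3 : HasDerivAt (fun s : ℝ => L / 2 * ‖v‖ ^ 2 * s ^ 2)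
        (L / 2 * ‖v‖ ^ 2 * (2 * t)) t := by
      have h := (hasDerivAt_pow 2 t).const_mul (L / 2 * ‖v‖ ^ 2)
      exact h.congr_deriv (by norm_num)
    exact (h1.sub h2).sub h3
  have hmono : AntitoneOn φ (Set.Icc 0 1) := by
    apply antitoneOn_of_deriv_nonpos (convex_Icc 0 1)
    · exact fun t _ => ((hder t).continuousAt).continuousWithinAt
    · exact fun t _ => ((hder t).differentiableAt).differentiableWithinAt
    · intro t ht
      rw [interior_Icc] at ht
      rw [(hder t).deriv]
      have hb : ⟪f' (x + t • v) - f' x, v⟫ ≤ L * t * ‖v‖ ^ 2 := by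
        calc ⟪f' (x + t • v) - f' x, v⟫ ≤ ‖f' (x + t • v) - f' x‖ * ‖v‖ :=
              real_inner_le_norm _ _
          _ ≤ (L * ‖(x + t • v) - x‖) * ‖v‖ := by
              have := hLip (x + t • v) x
              nlinarith [norm_nonneg v, this]
          _ = L * t * ‖v‖ ^ 2 := by
              rw [add_sub_cancel_left, norm_smul, Real.norm_eq_abs, abs_of_pos ht.1]; ring
      rw [inner_sub_left] at hb
      nlinarith [hb]
  have h01 := hmono (Set.mem_Icc.mpr ⟨le_refl 0, zero_le_one⟩)
    (Set.mem_Icc.mpr ⟨zero_le_one, le_refl 1⟩) zero_le_one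
  simp only [hφ, zero_smul, add_zero, one_smul] at h01
  have hxy : x + v = y := by rw [hv]; abel
  rw [hxy] at h01
  nlinarith [h01]

lemma grad_ineq {f : E → ℝ} (hfconv : ConvexOn ℝ Set.univ f) {f' : E → E}
    (hf' : ∀ x, HasGradientAt f (f' x) x) (x y : E) :
    f x + ⟪f' x, y - x⟫ ≤ f y := by
  set v := y - x with hv
  have hd0 : HasDerivAt (fun s : ℝ => f (x + s • v)) ⟪f' x, v⟫ 0 := by
    simpa using line_deriv hf' x v 0
  have hslope : Tendsto (slope (fun s : ℝ => f (x + s • v)) 0) (𝓝[>] 0) (𝓝 ⟪f' x, v⟫) :=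
    (hasDerivAt_iff_tendsto_slope.mp hd0).mono_left
      (nhdsWithin_mono 0 (fun s hs => ne_of_gt hs))
  have hbound : ∀ᶠ t in 𝓝[>] (0:ℝ), slope (fun s : ℝ => f (x + s • v)) 0 t ≤ f y - f x := by
    filter_upwards [Ioo_mem_nhdsGT_of_mem (Set.mem_Ico.mpr ⟨le_refl 0, zero_lt_one⟩)]
      with t ht
    have hcv := hfconv.2 (Set.mem_univ x) (Set.mem_univ y) (by linarith [ht.2] : (0:ℝ) ≤ 1 - t)
      ht.1.le (by ring)
    have hxt : (1 - t) • x + t • y = x + t • v := by rw [hv]; match_scalars <;> ring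
    rw [hxt] at hcv
    have h1 : x + (0:ℝ) • v = x := by simp
    rw [slope_def_field]
    simp only [h1, sub_zero]
    rw [div_le_iff₀ ht.1]
    simp only [smul_eq_mul] at hcv
    nlinarith [hcv, ht.1]
  have := le_of_tendsto hslope hbound
  have hxv : x + v = y := by rw [hv]; abel
  linarith [this]

lemma coco_half {f : E → ℝ} (hfconv : ConvexOn ℝ Set.univ f) {f' : E → E}
    (hf' : ∀ x, HasGradientAt f (f' x) x)
    {L : ℝ} (hL : 0 < L) (hLip : ∀ x y, ‖f' x - f' y‖ ≤ L * ‖x - y‖) (x y : E) :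
    f x + ⟪f' x, y - x⟫ + 1 / (2 * L) * ‖f' y - f' x‖ ^ 2 ≤ f y := by
  set g := f' y - f' x with hg
  set u := y - (L⁻¹) • g with hu
  have h1 := grad_ineq hfconv hf' x u
  have h2 := descent_lemma hf' hL hLip y u
  have huy : u - y = -(L⁻¹ • g) := by rw [hu]; abel
  have hux : u - x = (y - x) - L⁻¹ • g := by rw [hu]; abel
  have e1 : ⟪f' y, u - y⟫ = -(L⁻¹ * ⟪f' y, g⟫) := by
    rw [huy, inner_neg_right, real_inner_smul_right]
  have e2 : ‖u - y‖ ^ 2 = L⁻¹ ^ 2 * ‖g‖ ^ 2 := by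
    rw [huy, norm_neg, norm_smul, Real.norm_eq_abs, abs_of_pos (inv_pos.mpr hL), mul_pow]
  have e3 : ⟪f' x, u - x⟫ = ⟪f' x, y - x⟫ - L⁻¹ * ⟪f' x, g⟫ := by
    rw [hux, inner_sub_right, real_inner_smul_right]
  have e4 : ⟪f' y, g⟫ - ⟪f' x, g⟫ = ‖g‖ ^ 2 := by
    rw [← inner_sub_left, ← hg, real_inner_self_eq_norm_sq]
  have hL' : L⁻¹ * L = 1 := inv_mul_cancel₀ hL.ne'
  rw [e1, e2] at h2
  rw [e3] at h1
  have e5 : L⁻¹ * ⟪f' y, g⟫ - L⁻¹ * ⟪f' x, g⟫ = L⁻¹ * ‖g‖ ^ 2 := by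
    rw [← mul_sub, e4]
  have key2 : L / 2 * (L⁻¹ ^ 2 * ‖g‖ ^ 2) = 1 / (2 * L) * ‖g‖ ^ 2 := by
    field_simp
  have key3 : L⁻¹ * ‖g‖ ^ 2 = 2 * (1 / (2 * L) * ‖g‖ ^ 2) := by
    field_simp
  linarith [h1, h2, e5, key2, key3]

lemma cocoercive {f : E → ℝ} (hfconv : ConvexOn ℝ Set.univ f) {f' : E → E}
    (hf' : ∀ x, HasGradientAt f (f' x) x)
    {L : ℝ} (hL : 0 < L) (hLip : ∀ x y, ‖f' x - f' y‖ ≤ L * ‖x - y‖) (x y : E) :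
    (1 / L) * ‖f' y - f' x‖ ^ 2 ≤ ⟪f' y - f' x, y - x⟫ := by
  have h1 := coco_half hfconv hf' hL hLip x y
  have h2 := coco_half hfconv hf' hL hLip y x
  have e1 : ‖f' x - f' y‖ ^ 2 = ‖f' y - f' x‖ ^ 2 := by rw [← neg_sub, norm_neg]
  have e2 : ⟪f' y, x - y⟫ = - ⟪f' y, y - x⟫ := by rw [← inner_neg_right]; congr 1; abel
  have e3 : ⟪f' y - f' x, y - x⟫ = ⟪f' y, y - x⟫ - ⟪f' x, y - x⟫ := inner_sub_left _ _ _
  have h4 : 1 / (2 * L) * ‖f' y - f' x‖ ^ 2 + 1 / (2 * L) * ‖f' y - f' x‖ ^ 2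
      = 1 / L * ‖f' y - f' x‖ ^ 2 := by field_simp; ring
  rw [e1, e2] at h2
  linarith [h1, h2, e3, h4]

variable {E : Type*} [NormedAddCommGroup E] [InnerProductSpace ℝ E] [CompleteSpace E]

lemma onestep_ineq
    {α : ℝ} (hα : 0 < α)
    {r g : E → EReal}
    (hrconv : ∀ (a b : ℝ) (x y : E), 0 ≤ a → 0 ≤ b → a + b = 1 →
      r (a • x + b • y) ≤ (a : EReal) * r x + (b : EReal) * r y)
    (hrbot : ∀ x, r x ≠ ⊥) (hrtop : ∃ x, r x ≠ ⊤)
    (hgconv : ∀ (a b : ℝ) (x y : E), 0 ≤ a → 0 ≤ b → a + b = 1 →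
      g (a • x + b • y) ≤ (a : EReal) * g x + (b : EReal) * g y)
    (hgbot : ∀ x, g x ≠ ⊥) (hgtop : ∃ x, g x ≠ ⊤)
    {f : E → ℝ} (hfconv : ConvexOn ℝ Set.univ f)
    {f' : E → E} (hf' : ∀ x, HasGradientAt f (f' x) x)
    {Pr Pg : E → E}
    (hPr : ∀ w, IsProxPt (fun x => (α : EReal) * r x) w (Pr w))
    (hPg : ∀ w, IsProxPt (fun x => (α : EReal) * g x) w (Pg w))
    {P : E → E}
    (hP : ∀ z, P z = α⁻¹ • (Pr z - Pg ((2 : ℝ) • Pr z - z - α • f' (Pr z))))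
    {L : ℝ} (hL : 0 < L)
    (hLip : ∀ x y, ‖f' x - f' y‖ ≤ L * ‖x - y‖)
    {zs : E} (hzs : P zs = 0)
    {t : ℝ} (ht0 : 0 < t)
    (w : E) :
    ‖(w - α • P w) - zs‖ ^ 2 ≤ ‖w - zs‖ ^ 2 - α ^ 2 * (1 - t) * ‖P w‖ ^ 2
      - (2 * α / L - α ^ 2 / t) * ‖f' (Pr w) - f' (Pr zs)‖ ^ 2 := by
  set vstar : E := (2 : ℝ) • Pr zs - zs - α • f' (Pr zs) with hvstar
  have hfix : Pg vstar = Pr zs := by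
    have h0 := hzs
    rw [hP zs] at h0
    have h1 : Pr zs - Pg vstar = 0 := by
      rcases smul_eq_zero.mp h0 with h | h
      · exact absurd h (inv_ne_zero hα.ne')
      · exact h
    have := sub_eq_zero.mp h1
    exact this.symm
  set vw : E := (2 : ℝ) • Pr w - w - α • f' (Pr w) with hvw
  set a : E := Pr w - Pr zs with ha
  set b : E := Pg vw - Pr zs with hb
  set gg : E := f' (Pr w) - f' (Pr zs) with hgg
  set u : E := w - zs with hu
  have hA : ‖a‖ ^ 2 ≤ ⟪a, u⟫ := prox_firm hrbot hrconv hrtop hα hPr w zs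
  have hB : ‖b‖ ^ 2 ≤ ⟪b, vw - vstar⟫ := by
    have := prox_firm hgbot hgconv hgtop hα hPg vw vstar
    rwa [hfix] at this
  have hC : (1 / L) * ‖gg‖ ^ 2 ≤ ⟪gg, a⟫ :=
    cocoercive hfconv hf' hL hLip (Pr zs) (Pr w)
  have hab : α • P w = a - b := by
    rw [hP w, smul_smul, mul_inv_cancel₀ hα.ne', one_smul, ha, hb, ← hvw]
    abel
  have hv : vw - vstar = (2 : ℝ) • a - u - α • gg := by
    rw [hvw, hvstar, ha, hu, hgg]
    module
  rw [hv] at hB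
  -- expand inner products
  have eB : ⟪b, (2 : ℝ) • a - u - α • gg⟫
      = 2 * ⟪b, a⟫ - ⟪b, u⟫ - α * ⟪b, gg⟫ := by
    rw [inner_sub_right, inner_sub_right, real_inner_smul_right, real_inner_smul_right]
  rw [eB] at hB
  have eab : ‖a - b‖ ^ 2 = ‖a‖ ^ 2 - 2 * ⟪a, b⟫ + ‖b‖ ^ 2 := norm_sub_sq_real a b
  have euab : ⟪u, a - b⟫ = ⟪a, u⟫ - ⟪b, u⟫ := by
    rw [inner_sub_right, real_inner_comm u a, real_inner_comm u b]
  have s1 : ‖a - b‖ ^ 2 + α * ⟪gg, b⟫ ≤ ⟪u, a - b⟫ := by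
    have cab : ⟪a, b⟫ = ⟪b, a⟫ := real_inner_comm b a
    have cgb : ⟪gg, b⟫ = ⟪b, gg⟫ := real_inner_comm b gg
    have cgb' : α * ⟪gg, b⟫ = α * ⟪b, gg⟫ := by rw [cgb]
    linarith [hA, hB, eab, euab, cab, cgb']
  have s2 : α / L * ‖gg‖ ^ 2 ≤ α * ⟪gg, a⟫ := by
    have := mul_le_mul_of_nonneg_left hC hα.le
    calc α / L * ‖gg‖ ^ 2 = α * (1 / L * ‖gg‖ ^ 2) := by ring
      _ ≤ α * ⟪gg, a⟫ := this
  have s3 : α * ⟪gg, a - b⟫ ≤ α ^ 2 / (2 * t) * ‖gg‖ ^ 2 + t / 2 * ‖a - b‖ ^ 2 := by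
    have hi : ⟪gg, a - b⟫ ≤ ‖gg‖ * ‖a - b‖ := real_inner_le_norm _ _
    have hi2 : α * ⟪gg, a - b⟫ ≤ α * (‖gg‖ * ‖a - b‖) :=
      mul_le_mul_of_nonneg_left hi hα.le
    have hyoung : 2 * t * (α * (‖gg‖ * ‖a - b‖)) ≤ α ^ 2 * ‖gg‖ ^ 2 + t ^ 2 * ‖a - b‖ ^ 2 := by
      nlinarith [sq_nonneg (α * ‖gg‖ - t * ‖a - b‖)]
    have hdiv : α * (‖gg‖ * ‖a - b‖) ≤ (α ^ 2 * ‖gg‖ ^ 2 + t ^ 2 * ‖a - b‖ ^ 2) / (2 * t) := by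
      rw [le_div_iff₀ (by linarith)]
      linarith [hyoung]
    have heq : (α ^ 2 * ‖gg‖ ^ 2 + t ^ 2 * ‖a - b‖ ^ 2) / (2 * t)
        = α ^ 2 / (2 * t) * ‖gg‖ ^ 2 + t / 2 * ‖a - b‖ ^ 2 := by
      field_simp
    linarith [hi2, hdiv, heq.symm.le]
  have s4 : ⟪gg, a - b⟫ = ⟪gg, a⟫ - ⟪gg, b⟫ := inner_sub_right _ _ _
  have s4m : α * ⟪gg, b⟫ = α * ⟪gg, a⟫ - α * ⟪gg, a - b⟫ := by rw [s4]; ring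
  have ezp : (w - α • P w) - zs = u - (a - b) := by
    rw [hab, hu]
    abel
  have enorm : ‖(w - α • P w) - zs‖ ^ 2 = ‖u‖ ^ 2 - 2 * ⟪u, a - b⟫ + ‖a - b‖ ^ 2 := by
    rw [ezp, norm_sub_sq_real]
  have ediv : 2 * (α ^ 2 / (2 * t) * ‖gg‖ ^ 2) = α ^ 2 / t * ‖gg‖ ^ 2 := by
    field_simp
  have master : ‖(w - α • P w) - zs‖ ^ 2
      ≤ ‖u‖ ^ 2 - (1 - t) * ‖a - b‖ ^ 2 - (2 * α / L - α ^ 2 / t) * ‖gg‖ ^ 2 := by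
    have e2al : 2 * (α / L * ‖gg‖ ^ 2) = 2 * α / L * ‖gg‖ ^ 2 := by ring
    linarith [enorm, s1, s2, s3, s4m, ediv, e2al]
  have epw : ‖a - b‖ ^ 2 = α ^ 2 * ‖P w‖ ^ 2 := by
    rw [← hab, norm_smul, Real.norm_eq_abs, abs_of_pos hα, mul_pow]
  have efin : (1 - t) * ‖a - b‖ ^ 2 = α ^ 2 * (1 - t) * ‖P w‖ ^ 2 := by
    rw [epw]; ring
  linarith [master, efin]

end Aux

/-- Summability of the squared PPG residuals and the O(1/k) rate. -/
theorem stmt14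
    {d : ℕ} (α : ℝ) (hα : 0 < α)
    (r g : EuclideanSpace ℝ (Fin d) → EReal)
    (hr : ClosedConvexProper r) (hg : ClosedConvexProper g)
    (f : EuclideanSpace ℝ (Fin d) → ℝ) (hfconv : ConvexOn ℝ Set.univ f)
    (f' : EuclideanSpace ℝ (Fin d) → EuclideanSpace ℝ (Fin d))
    (hf' : ∀ x, HasGradientAt f (f' x) x)
    (Pr Pg : EuclideanSpace ℝ (Fin d) → EuclideanSpace ℝ (Fin d))
    (hPr : ∀ w, IsProxPt (fun x => (α : EReal) * r x) w (Pr w))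
    (hPg : ∀ w, IsProxPt (fun x => (α : EReal) * g x) w (Pg w))
    (P : EuclideanSpace ℝ (Fin d) → EuclideanSpace ℝ (Fin d))
    (hP : ∀ z, P z = α⁻¹ • (Pr z - Pg ((2 : ℝ) • Pr z - z - α • f' (Pr z))))
    (L : ℝ) (hL : 0 < L)
    (hLip : ∀ x y, ‖f' x - f' y‖ ≤ L * ‖x - y‖)
    (hαL : α < 3 / (2 * L))
    (z : ℕ → EuclideanSpace ℝ (Fin d))
    (hiter : ∀ k, z (k + 1) = z k - α • P (z k))
    (zs : EuclideanSpace ℝ (Fin d)) (hzs : P zs = 0) :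
    Summable (fun k => ‖P (z k)‖ ^ 2) ∧
    Summable (fun k => ‖f' (Pr (z k)) - f' (Pr zs)‖ ^ 2) ∧
    ∃ C : ℝ, ∀ k : ℕ, 1 ≤ k → ∃ i ≤ k, ‖P (z i)‖ ^ 2 ≤ C / k := by
  obtain ⟨-, hrconv, hrbot, hrtop⟩ := hr
  obtain ⟨-, hgconv, hgbot, hgtop⟩ := hg
  have hαL2 : α * L < 2 := by
    have h1 : α * L < (3 / (2 * L)) * L := mul_lt_mul_of_pos_right hαL hL
    have h2 : (3 / (2 * L)) * L = 3 / 2 := by field_simp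
    linarith
  set t : ℝ := (α * L + 2) / 4 with htdef
  have hαLpos : 0 < α * L := mul_pos hα hL
  have ht0 : 0 < t := by rw [htdef]; linarith
  have ht1 : t < 1 := by rw [htdef]; linarith
  set c1 : ℝ := α ^ 2 * (1 - t) with hc1def
  set c2 : ℝ := 2 * α / L - α ^ 2 / t with hc2def
  have hc1 : 0 < c1 := mul_pos (pow_pos hα 2) (by linarith)
  have hc2 : 0 < c2 := by
    have h1 : α ^ 2 / t < 2 * α / L := by
      rw [div_lt_div_iff₀ ht0 hL]
      rw [htdef]
      nlinarith [hα, hαL2, hαLpos]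
    rw [hc2def]; linarith
  have ones : ∀ k : ℕ, ‖z (k+1) - zs‖^2 ≤ ‖z k - zs‖^2 - c1 * ‖P (z k)‖^2
      - c2 * ‖f' (Pr (z k)) - f' (Pr zs)‖^2 := by
    intro k
    rw [hiter k, hc1def, hc2def]
    exact onestep_ineq hα hrconv hrbot hrtop hgconv hgbot hgtop hfconv hf' hPr hPg hP
      hL hLip hzs ht0 (z k)
  have hsum : ∀ n : ℕ, ∑ k ∈ Finset.range n,
      (c1 * ‖P (z k)‖^2 + c2 * ‖f' (Pr (z k)) - f' (Pr zs)‖^2) ≤ ‖z 0 - zs‖^2 := by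
    intro n
    have tele : ∑ k ∈ Finset.range n, (‖z k - zs‖^2 - ‖z (k+1) - zs‖^2)
        = ‖z 0 - zs‖^2 - ‖z n - zs‖^2 := Finset.sum_range_sub' (fun k => ‖z k - zs‖^2) n
    have hle : ∑ k ∈ Finset.range n,
        (c1 * ‖P (z k)‖^2 + c2 * ‖f' (Pr (z k)) - f' (Pr zs)‖^2)
        ≤ ∑ k ∈ Finset.range n, (‖z k - zs‖^2 - ‖z (k+1) - zs‖^2) :=
      Finset.sum_le_sum (fun k _ => by linarith [ones k])
    have hnn : (0:ℝ) ≤ ‖z n - zs‖^2 := sq_nonneg _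
    linarith
  have hb1 : ∀ n : ℕ, ∑ k ∈ Finset.range n, ‖P (z k)‖^2 ≤ ‖z 0 - zs‖^2 / c1 := by
    intro n
    rw [le_div_iff₀ hc1]
    calc (∑ k ∈ Finset.range n, ‖P (z k)‖^2) * c1
        = ∑ k ∈ Finset.range n, c1 * ‖P (z k)‖^2 := by
          rw [Finset.sum_mul]; exact Finset.sum_congr rfl (fun k _ => by ring)
      _ ≤ ∑ k ∈ Finset.range n,
          (c1 * ‖P (z k)‖^2 + c2 * ‖f' (Pr (z k)) - f' (Pr zs)‖^2) :=
          Finset.sum_le_sum (fun k _ =>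
            le_add_of_nonneg_right (mul_nonneg hc2.le (sq_nonneg _)))
      _ ≤ ‖z 0 - zs‖^2 := hsum n
  have hb2 : ∀ n : ℕ, ∑ k ∈ Finset.range n, ‖f' (Pr (z k)) - f' (Pr zs)‖^2
      ≤ ‖z 0 - zs‖^2 / c2 := by
    intro n
    rw [le_div_iff₀ hc2]
    calc (∑ k ∈ Finset.range n, ‖f' (Pr (z k)) - f' (Pr zs)‖^2) * c2
        = ∑ k ∈ Finset.range n, c2 * ‖f' (Pr (z k)) - f' (Pr zs)‖^2 := by
          rw [Finset.sum_mul]; exact Finset.sum_congr rfl (fun k _ => by ring)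
      _ ≤ ∑ k ∈ Finset.range n,
          (c1 * ‖P (z k)‖^2 + c2 * ‖f' (Pr (z k)) - f' (Pr zs)‖^2) :=
          Finset.sum_le_sum (fun k _ =>
            le_add_of_nonneg_left (mul_nonneg hc1.le (sq_nonneg _)))
      _ ≤ ‖z 0 - zs‖^2 := hsum n
  refine ⟨summable_of_sum_range_le (fun k => sq_nonneg _) hb1,
    summable_of_sum_range_le (fun k => sq_nonneg _) hb2, ⟨‖z 0 - zs‖^2 / c1, ?_⟩⟩
  intro k hk
  by_contra hcon
  push_neg at hcon
  have hk0 : (0:ℝ) < (k:ℝ) := by exact_mod_cast Nat.pos_of_ne_zero (by omega)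
  have hlt : ‖z 0 - zs‖^2 / c1 < ∑ i ∈ Finset.range k, ‖P (z i)‖^2 := by
    have hstrict : ∑ i ∈ Finset.range k, (‖z 0 - zs‖^2 / c1 / (k:ℝ))
        < ∑ i ∈ Finset.range k, ‖P (z i)‖^2 :=
      Finset.sum_lt_sum_of_nonempty (Finset.nonempty_range_iff.mpr (by omega))
        (fun i hi => hcon i (Nat.le_of_lt (Finset.mem_range.mp hi)))
    have hconst : ∑ i ∈ Finset.range k, (‖z 0 - zs‖^2 / c1 / (k:ℝ))
        = ‖z 0 - zs‖^2 / c1 := by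
      rw [Finset.sum_const, Finset.card_range, nsmul_eq_mul]
      field_simp
    linarith
  exact absurd (hb1 k) (not_le.mpr hlt)
end
end
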